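/- Suppose V = V_1 ⊕ ⋯ ⊕ V_l is an orthogonal decomposition of a finite-dimensional Hermitian vector space, and A(t) is a family of positive definite Hermitian endomorphisms such that for each i, every unit vector v ∈ V_i satisfies lim_{t→∞} (1/t)·log⟨A(t)v, v⟩ = -μ_i - 1, uniformly on the unit sphere of V_i, where μ_1 > ⋯ > μ_l. Then lim_{t→∞} (1/t)·log det A(t) = Σ_i (-μ_i - 1)·dim_ℂ V_i. -/

import Mathlib

open Filter Topology

lemma aux_log_abs_le {x y : ℝ} (hx0 : 0 ≤ x) (hx : x ≤ 1/2) (h1 : 1 - x ≤ y)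
    (h2 : y ≤ 1 + x) : |Real.log y| ≤ 2 * x := by
  have hy0 : 0 < y := by linarith
  have hup : Real.log y ≤ x := (Real.log_le_sub_one_of_pos hy0).trans (by linarith)
  have hlo : -(2*x) ≤ Real.log y := by
    have h1x : (0:ℝ) < 1 - x := by linarith
    have hexp : Real.exp (-(2*x)) ≤ 1 - x := by
      have he : (1:ℝ) + 2*x ≤ Real.exp (2*x) := by
        have := Real.add_one_le_exp (2*x); linarith
      have hmul : Real.exp (-(2*x)) * Real.exp (2*x) = 1 := by
        rw [← Real.exp_add]; norm_num
      nlinarith [Real.exp_pos (-(2*x))]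
    calc -(2*x) = Real.log (Real.exp (-(2*x))) := (Real.log_exp _).symm
      _ ≤ Real.log y := Real.log_le_log (Real.exp_pos _) (hexp.trans h1)
  rw [abs_le]; constructor <;> linarith

/-- Chau–Tam Lyapunov regularity, item (iv): if `V = V_1 ⊕ ⋯ ⊕ V_l` is an
orthogonal decomposition of a Hermitian vector space, `A(t)` are positive
definite Hermitian endomorphisms such that on the unit sphere of each `V_i`,
`(1/t)·log⟨A(t)v, v⟩ → -μ_i - 1` uniformly (with `μ_1 > ⋯ > μ_l > 0`), and the
subspaces are asymptotically orthogonal for `A(t)`, then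
`(1/t)·log det A(t) → Σ_i (-μ_i - 1)·dim_ℂ V_i`. -/
theorem stmt_16 (V : Type*) [NormedAddCommGroup V] [InnerProductSpace ℂ V]
    [FiniteDimensional ℂ V] (l : ℕ)
    (Vsub : Fin l → Submodule ℂ V)
    (horth : ∀ i j, i ≠ j → ∀ v ∈ Vsub i, ∀ w ∈ Vsub j, (inner ℂ v w : ℂ) = 0)
    (hspan : iSup Vsub = ⊤)
    (μ : Fin l → ℝ) (hμ : StrictAnti μ) (hμpos : ∀ i, 0 < μ i)
    (A : ℝ → V →ₗ[ℂ] V)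
    (hsym : ∀ t, LinearMap.IsSymmetric (A t))
    (hpos : ∀ (t : ℝ) (v : V), v ≠ 0 → 0 < (inner ℂ (A t v) v : ℂ).re)
    (hrate : ∀ i, ∀ ε > (0:ℝ), ∃ T : ℝ, ∀ t ≥ T, ∀ v ∈ Vsub i, ‖v‖ = 1 →
      |(1 / t) * Real.log ((inner ℂ (A t v) v : ℂ).re) - (-(μ i) - 1)| < ε)
    (hasorth : ∀ i j, i ≠ j → ∀ ε > (0:ℝ), ∃ T : ℝ, ∀ t ≥ T,
      ∀ v ∈ Vsub i, ∀ w ∈ Vsub j, ‖v‖ = 1 → ‖w‖ = 1 →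
        ‖inner ℂ (A t v) w‖ ≤
          ε * Real.sqrt ((inner ℂ (A t v) v : ℂ).re * (inner ℂ (A t w) w : ℂ).re)) :
    Tendsto (fun t => (1 / t) * Real.log (‖LinearMap.det (A t)‖))
      atTop
      (𝓝 (∑ i, (-(μ i) - 1) * (Module.finrank ℂ (Vsub i) : ℝ))) := by
  classical
  set m : Fin l → ℕ := fun i => Module.finrank ℂ (Vsub i) with hm
  have hofam : OrthogonalFamily ℂ (fun i => Vsub i) (fun i => (Vsub i).subtypeₗᵢ) :=
    fun i j hij v w => horth i j hij v v.2 w w.2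
  have hint : DirectSum.IsInternal (fun i => Vsub i) :=
    DirectSum.isInternal_submodule_of_iSupIndep_of_iSup_eq_top hofam.independent hspan
  set N : ℕ := Fintype.card (Σ i : Fin l, Fin (m i)) with hN
  rw [Metric.tendsto_atTop]
  intro ε hε
  set δ : ℝ := min (ε / (2*(N:ℝ)^2 + N + 1)) (1/(2*(N:ℝ)+2)) with hδdef
  have hδpos : 0 < δ := lt_min (by positivity) (by positivity)
  have hNδ : (N:ℝ) * δ ≤ 1/2 := by
    have h1 : δ ≤ 1/(2*(N:ℝ)+2) := min_le_right _ _
    have h2 : (0:ℝ) < 2*(N:ℝ)+2 := by positivity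
    rw [le_div_iff₀ h2] at h1
    nlinarith [hδpos.le, Nat.cast_nonneg (α := ℝ) N]
  have hfin : (2*(N:ℝ)^2 + N) * δ < ε := by
    have h1 : δ ≤ ε / (2*(N:ℝ)^2 + N + 1) := min_le_left _ _
    have h2 : (0:ℝ) < 2*(N:ℝ)^2 + N + 1 := by positivity
    rw [le_div_iff₀ h2] at h1
    nlinarith [hδpos]
  choose Trate hTrate using fun i => hrate i δ hδpos
  have horth' : ∀ i j : Fin l, ∃ T : ℝ, ∀ t ≥ T, i ≠ j →
      ∀ v ∈ Vsub i, ∀ w ∈ Vsub j, ‖v‖ = 1 → ‖w‖ = 1 →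
        ‖inner ℂ (A t v) w‖ ≤
          δ * Real.sqrt ((inner ℂ (A t v) v : ℂ).re * (inner ℂ (A t w) w : ℂ).re) := by
    intro i j
    by_cases h : i ≠ j
    · obtain ⟨T, hT⟩ := hasorth i j h δ hδpos
      exact ⟨T, fun t ht _ => hT t ht⟩
    · exact ⟨0, fun t _ h' => absurd h' h⟩
  choose Torth hTorth using horth'
  refine ⟨1 + (∑ i, |Trate i|) + (∑ i, ∑ j, |Torth i j|), fun t ht => ?_⟩
  have hs1 : (0:ℝ) ≤ ∑ i, |Trate i| := Finset.sum_nonneg fun i _ => abs_nonneg _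
  have hs2 : (0:ℝ) ≤ ∑ i, ∑ j, |Torth i j| :=
    Finset.sum_nonneg fun i _ => Finset.sum_nonneg fun j _ => abs_nonneg _
  have ht1 : (1:ℝ) ≤ t := by linarith [ht]
  have ht0 : (0:ℝ) < t := lt_of_lt_of_le one_pos ht1
  have htrate : ∀ i, Trate i ≤ t := by
    intro i
    have : |Trate i| ≤ ∑ i, |Trate i| :=
      Finset.single_le_sum (fun i _ => abs_nonneg (Trate i)) (Finset.mem_univ i)
    calc Trate i ≤ |Trate i| := le_abs_self _
      _ ≤ t := by linarith [ht]
  have htorth : ∀ i j, Torth i j ≤ t := by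
    intro i j
    have h1 : |Torth i j| ≤ ∑ j, |Torth i j| :=
      Finset.single_le_sum (fun j _ => abs_nonneg (Torth i j)) (Finset.mem_univ j)
    have h2 : (∑ j, |Torth i j|) ≤ ∑ i, ∑ j, |Torth i j| :=
      Finset.single_le_sum
        (fun i _ => Finset.sum_nonneg fun j _ => abs_nonneg (Torth i j)) (Finset.mem_univ i)
    calc Torth i j ≤ |Torth i j| := le_abs_self _
      _ ≤ t := by linarith [ht]
  -- compressed operators on each block
  let S : ∀ i : Fin l, (Vsub i →ₗ[ℂ] Vsub i) := fun i =>
    ((Submodule.orthogonalProjection (Vsub i)).toLinearMap.comp ((A t).comp (Vsub i).subtype))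
  have key : ∀ (i : Fin l) (x v : V), x ∈ Vsub i →
      (inner ℂ x v : ℂ) = inner ℂ x ((Submodule.orthogonalProjection (Vsub i) v : V)) := by
    intro i x v hx
    have h0 : (inner ℂ (v - (Submodule.orthogonalProjection (Vsub i) v : V)) x : ℂ) = 0 :=
      Submodule.starProjection_inner_eq_zero v x hx
    have h1 : (inner ℂ x (v - (Submodule.orthogonalProjection (Vsub i) v : V)) : ℂ) = 0 := by
      rw [← inner_conj_symm, h0, map_zero]
    rw [inner_sub_right] at h1
    exact sub_eq_zero.mp h1
  have hSsym : ∀ i, LinearMap.IsSymmetric (S i) := by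
    intro i x y
    show (inner ℂ (S i x) y : ℂ) = inner ℂ x (S i y)
    rw [Submodule.coe_inner, Submodule.coe_inner]
    have e1 : ((S i x : Vsub i) : V) = (Submodule.orthogonalProjection (Vsub i) (A t x) : V) := rfl
    have e2 : ((S i y : Vsub i) : V) = (Submodule.orthogonalProjection (Vsub i) (A t y) : V) := rfl
    rw [e1, e2]
    calc (inner ℂ ((Submodule.orthogonalProjection (Vsub i) (A t ↑x) : V)) (↑y : V) : ℂ)
        = (starRingEnd ℂ) (inner ℂ (↑y : V) ((Submodule.orthogonalProjection (Vsub i) (A t ↑x) : V))) :=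
          (inner_conj_symm _ _).symm
      _ = (starRingEnd ℂ) (inner ℂ (↑y : V) (A t ↑x)) := by rw [← key i ↑y (A t ↑x) y.2]
      _ = inner ℂ (A t ↑x) (↑y : V) := inner_conj_symm _ _
      _ = inner ℂ (↑x : V) (A t ↑y) := hsym t ↑x ↑y
      _ = inner ℂ (↑x : V) ((Submodule.orthogonalProjection (Vsub i) (A t ↑y)) : V) := key i ↑x (A t ↑y) x.2
  let u : ∀ i : Fin l, OrthonormalBasis (Fin (m i)) ℂ (Vsub i) :=
    fun i => (hSsym i).eigenvectorBasis rfl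
  let b : OrthonormalBasis (Σ i : Fin l, Fin (m i)) ℂ V :=
    hint.collectedOrthonormalBasis hofam u
  have hb : ∀ a : (Σ i : Fin l, Fin (m i)), b a = ↑(u a.1 a.2) := by
    intro a
    show (hint.collectedOrthonormalBasis hofam u) a = _
    rw [DirectSum.IsInternal.collectedOrthonormalBasis, Module.Basis.coe_toOrthonormalBasis,
      DirectSum.IsInternal.collectedBasis_coe]
    simp
  have hbmem : ∀ a : (Σ i : Fin l, Fin (m i)), b a ∈ Vsub a.1 := by
    intro a; rw [hb]; exact (u a.1 a.2).2
  have hbnorm : ∀ a : (Σ i : Fin l, Fin (m i)), ‖b a‖ = 1 := fun a => b.orthonormal.1 a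
  have hbne : ∀ a : (Σ i : Fin l, Fin (m i)), b a ≠ 0 := by
    intro a h; have := hbnorm a; rw [h, norm_zero] at this; norm_num at this
  set lam : (Σ i : Fin l, Fin (m i)) → ℝ := fun a => (inner ℂ (A t (b a)) (b a) : ℂ).re
    with hlamdef
  have hlampos : ∀ a, 0 < lam a := fun a => hpos t (b a) (hbne a)
  have hinnerreal : ∀ v : V, (inner ℂ (A t v) v : ℂ) = ((inner ℂ (A t v) v : ℂ).re : ℂ) := by
    intro v
    have h1 : (starRingEnd ℂ) (inner ℂ (A t v) v : ℂ) = inner ℂ (A t v) v := by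
      rw [inner_conj_symm]
      exact (hsym t v v).symm
    exact (Complex.conj_eq_iff_re.1 h1).symm
  set M : Matrix (Σ i : Fin l, Fin (m i)) (Σ i : Fin l, Fin (m i)) ℂ :=
    fun a a' => inner ℂ (b a) (A t (b a')) with hMdef
  have hdetM : LinearMap.det (A t) = M.det := by
    rw [← LinearMap.det_toMatrix b.toBasis (A t)]
    congr 1
    ext a a'
    rw [LinearMap.toMatrix_apply, OrthonormalBasis.coe_toBasis,
      OrthonormalBasis.coe_toBasis_repr_apply, OrthonormalBasis.repr_apply_apply]
  have hermM : ∀ a a', (starRingEnd ℂ) (M a' a) = M a a' := by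
    intro a a'
    show (starRingEnd ℂ) (inner ℂ (b a') (A t (b a)) : ℂ) = inner ℂ (b a) (A t (b a'))
    calc (starRingEnd ℂ) (inner ℂ (b a') (A t (b a)) : ℂ)
        = inner ℂ (A t (b a)) (b a') := inner_conj_symm _ _
      _ = inner ℂ (b a) (A t (b a')) := hsym t _ _
  have hMdiag : ∀ a, M a a = ((lam a : ℝ) : ℂ) := by
    intro a
    show (inner ℂ (b a) (A t (b a)) : ℂ) = _
    rw [← hsym t (b a) (b a)]
    exact hinnerreal (b a)
  have hMblock : ∀ (i : Fin l) (k k' : Fin (m i)), k ≠ k' →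
      M ⟨i, k⟩ ⟨i, k'⟩ = 0 := by
    intro i k k' hkk'
    show (inner ℂ (b ⟨i, k⟩) (A t (b ⟨i, k'⟩)) : ℂ) = 0
    rw [hb, hb]
    rw [key i _ _ (u i k).2]
    have e1 : ((Submodule.orthogonalProjection (Vsub i) (A t ↑(u i k'))) : V) = ↑(S i (u i k')) := rfl
    rw [e1, ← Submodule.coe_inner]
    have e2 : S i (u i k') = (((hSsym i).eigenvalues rfl k' : ℝ) : ℂ) • u i k' :=
      (hSsym i).apply_eigenvectorBasis rfl k'
    rw [e2, inner_smul_right, orthonormal_iff_ite.mp (u i).orthonormal]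
    simp [hkk']
  have hMcross : ∀ (a a' : (Σ i : Fin l, Fin (m i))), a.1 ≠ a'.1 →
      ‖M a a'‖ ≤ δ * (Real.sqrt (lam a) * Real.sqrt (lam a')) := by
    intro a a' hne
    have h1 : (inner ℂ (b a) (A t (b a')) : ℂ) = inner ℂ (A t (b a)) (b a') := (hsym t _ _).symm
    show ‖inner ℂ (b a) (A t (b a'))‖ ≤ _
    rw [h1]
    have h2 := hTorth a.1 a'.1 t (htorth _ _) hne (b a) (hbmem a) (b a') (hbmem a')
      (hbnorm a) (hbnorm a')
    rw [Real.sqrt_mul (le_of_lt (hlampos a))] at h2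
    exact h2
  set rr : (Σ i : Fin l, Fin (m i)) → ℝ := fun a => Real.sqrt (lam a) with hrrdef
  have hrrpos : ∀ a, 0 < rr a := fun a => Real.sqrt_pos.2 (hlampos a)
  set Q : Matrix (Σ i : Fin l, Fin (m i)) (Σ i : Fin l, Fin (m i)) ℂ :=
    fun a a' => M a a' / (((rr a : ℝ) : ℂ) * ((rr a' : ℝ) : ℂ)) with hQdef
  have hrrC : ∀ a, ((rr a : ℝ) : ℂ) ≠ 0 := fun a => by
    exact_mod_cast (hrrpos a).ne'
  have hfact : M = Matrix.diagonal (fun a => ((rr a : ℝ) : ℂ)) * Q *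
      Matrix.diagonal (fun a => ((rr a : ℝ) : ℂ)) := by
    ext a a'
    rw [Matrix.mul_diagonal, Matrix.diagonal_mul]
    have hcalc : ∀ (z x y : ℂ), x ≠ 0 → y ≠ 0 → x * (z / (x * y)) * y = z := by
      intro z x y hx hy; field_simp
    exact (hcalc (M a a') _ _ (hrrC a) (hrrC a')).symm
  have hrrprod : (∏ a, ((rr a : ℝ) : ℂ)) * (∏ a, ((rr a : ℝ) : ℂ))
      = (((∏ a, lam a) : ℝ) : ℂ) := by
    rw [← Finset.prod_mul_distrib, Complex.ofReal_prod]
    refine Finset.prod_congr rfl fun a _ => ?_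
    rw [← Complex.ofReal_mul]
    norm_cast
    exact Real.mul_self_sqrt (hlampos a).le
  have hdetfact : M.det = (((∏ a, lam a) : ℝ) : ℂ) * Q.det := by
    rw [hfact, Matrix.det_mul, Matrix.det_mul, Matrix.det_diagonal, ← hrrprod]
    ring
  have hQconj : ∀ a a', star (Q a' a) = Q a a' := by
    intro a a'
    show star (M a' a / (((rr a' : ℝ) : ℂ) * ((rr a : ℝ) : ℂ))) = _
    rw [star_div₀, star_mul']
    have e1 : star (M a' a) = M a a' := hermM a a'
    have e2 : ∀ a, star (((rr a : ℝ) : ℂ)) = ((rr a : ℝ) : ℂ) := fun a =>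
      Complex.conj_ofReal _
    rw [e1, e2, e2]
    show M a a' / (((rr a' : ℝ) : ℂ) * ((rr a : ℝ) : ℂ)) = M a a' / _
    rw [mul_comm]
  have hQherm : Q.IsHermitian := by
    apply Matrix.IsHermitian.ext
    intro a a'
    exact hQconj a a'
  have hQdiag : ∀ a, Q a a = 1 := by
    intro a
    show M a a / (((rr a : ℝ) : ℂ) * ((rr a : ℝ) : ℂ)) = 1
    rw [hMdiag, ← Complex.ofReal_mul]
    have : rr a * rr a = lam a := Real.mul_self_sqrt (hlampos a).le
    rw [this]
    exact div_self (by exact_mod_cast (hlampos a).ne')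
  have hQoff : ∀ a a', a ≠ a' → ‖Q a a'‖ ≤ δ := by
    intro a a' hne
    rcases eq_or_ne a.1 a'.1 with h1 | h1
    · obtain ⟨i, k⟩ := a; obtain ⟨i', k'⟩ := a'
      dsimp at h1; subst h1
      have hk : k ≠ k' := by
        rintro rfl; exact hne rfl
      show ‖M ⟨i, k⟩ ⟨i, k'⟩ / _‖ ≤ δ
      rw [hMblock i k k' hk]
      simpa using hδpos.le
    · show ‖M a a' / (((rr a : ℝ) : ℂ) * ((rr a' : ℝ) : ℂ))‖ ≤ δ
      have hnorm : ‖(((rr a : ℝ) : ℂ) * ((rr a' : ℝ) : ℂ))‖ = rr a * rr a' := by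
        rw [norm_mul, Complex.norm_real, Complex.norm_real, Real.norm_eq_abs,
          Real.norm_eq_abs, abs_of_pos (hrrpos a), abs_of_pos (hrrpos a')]
      rw [norm_div, hnorm, div_le_iff₀ (mul_pos (hrrpos a) (hrrpos a'))]
      calc ‖M a a'‖ = ‖M a a'‖ := rfl
        _ ≤ δ * (rr a * rr a') := hMcross a a' h1
  set eig : (Σ i : Fin l, Fin (m i)) → ℝ := hQherm.eigenvalues with heigdef
  have heig : ∀ j, |eig j - 1| ≤ (N:ℝ) * δ := by
    intro j
    have hv := hQherm.mulVec_eigenvectorBasis j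
    have hvne : ⇑(hQherm.eigenvectorBasis j) ≠ 0 := by
      intro h
      have h0 : hQherm.eigenvectorBasis j = 0 := by
        ext x; exact congrFun h x
      exact hQherm.eigenvectorBasis.orthonormal.ne_zero j h0
    have hev : Module.End.HasEigenvalue (Matrix.toLin' Q) ((eig j : ℝ) : ℂ) := by
      apply Module.End.hasEigenvalue_of_hasEigenvector
        (x := ⇑(hQherm.eigenvectorBasis j))
      refine ⟨Module.End.mem_eigenspace_iff.2 ?_, hvne⟩
      rw [Matrix.toLin'_apply, hv]
      ext x
      simp [Pi.smul_apply, Complex.real_smul, heigdef]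
    obtain ⟨k, hk⟩ := eigenvalue_mem_ball hev
    have hcard : ((Finset.univ.erase k).card : ℝ) ≤ (N:ℝ) := by
      have : (Finset.univ.erase k).card ≤ N :=
        le_trans (Finset.card_le_card (Finset.erase_subset _ _)) (le_of_eq Finset.card_univ)
      exact_mod_cast this
    have hrad : (∑ j' ∈ Finset.univ.erase k, ‖Q k j'‖) ≤ (N:ℝ) * δ := by
      calc (∑ j' ∈ Finset.univ.erase k, ‖Q k j'‖)
          ≤ ∑ _j' ∈ Finset.univ.erase k, δ :=
            Finset.sum_le_sum fun j' hj' =>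
              hQoff k j' (Ne.symm (Finset.ne_of_mem_erase hj'))
        _ = ((Finset.univ.erase k).card : ℝ) * δ := by
            rw [Finset.sum_const, nsmul_eq_mul]
        _ ≤ (N:ℝ) * δ := mul_le_mul_of_nonneg_right hcard hδpos.le
    have h1 : ‖((eig j : ℝ) : ℂ) - Q k k‖ ≤ (N:ℝ) * δ :=
      le_trans (by simpa [Metric.mem_closedBall, dist_eq_norm] using hk) hrad
    rw [hQdiag k] at h1
    have h2 : ((eig j : ℝ) : ℂ) - 1 = ((eig j - 1 : ℝ) : ℂ) := by push_cast; ring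
    rw [h2, Complex.norm_real, Real.norm_eq_abs] at h1
    exact h1
  have heigpos : ∀ j, 0 < eig j := by
    intro j
    have := abs_le.mp (heig j)
    linarith [this.1, hNδ]
  have hdetQ : Q.det = (((∏ j, eig j) : ℝ) : ℂ) := by
    rw [hQherm.det_eq_prod_eigenvalues, Complex.ofReal_prod]
    rfl
  have hprodlampos : 0 < ∏ a, lam a := Finset.prod_pos fun a _ => hlampos a
  have hprodeigpos : 0 < ∏ j, eig j := Finset.prod_pos fun j _ => heigpos j
  have habs : ‖LinearMap.det (A t)‖ = (∏ a, lam a) * (∏ j, eig j) := by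
    rw [hdetM, hdetfact, hdetQ, ← Complex.ofReal_mul, Complex.norm_real, Real.norm_eq_abs]
    exact abs_of_pos (mul_pos hprodlampos hprodeigpos)
  have hlog : Real.log (‖LinearMap.det (A t)‖)
      = (∑ a, Real.log (lam a)) + (∑ j, Real.log (eig j)) := by
    rw [habs, Real.log_mul hprodlampos.ne' hprodeigpos.ne',
      Real.log_prod (fun a _ => (hlampos a).ne'),
      Real.log_prod (fun j _ => (heigpos j).ne')]
  have hc : ∑ a : (Σ i : Fin l, Fin (m i)), (-(μ a.1) - 1)
      = ∑ i, (-(μ i) - 1) * (m i : ℝ) := by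
    rw [← Finset.univ_sigma_univ, Finset.sum_sigma]
    refine Finset.sum_congr rfl fun i _ => ?_
    show ∑ _s : Fin (m i), (-(μ i) - 1) = _
    rw [Finset.sum_const, Finset.card_univ, Fintype.card_fin, nsmul_eq_mul, mul_comm]
  rw [Real.dist_eq, hlog]
  have hexp : (1/t) * ((∑ a, Real.log (lam a)) + (∑ j, Real.log (eig j)))
      - (∑ i, (-(μ i) - 1) * (m i : ℝ))
      = (∑ a : (Σ i : Fin l, Fin (m i)), ((1/t) * Real.log (lam a) - (-(μ a.1) - 1)))
        + (1/t) * (∑ j, Real.log (eig j)) := by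
    conv_rhs => rw [Finset.sum_sub_distrib, ← Finset.mul_sum]
    rw [← hc]
    ring
  rw [hexp]
  have h1 : |∑ a : (Σ i : Fin l, Fin (m i)), ((1/t) * Real.log (lam a) - (-(μ a.1) - 1))|
      ≤ (N:ℝ) * δ := by
    calc |∑ a : (Σ i : Fin l, Fin (m i)), ((1/t) * Real.log (lam a) - (-(μ a.1) - 1))|
        ≤ ∑ a : (Σ i : Fin l, Fin (m i)), |(1/t) * Real.log (lam a) - (-(μ a.1) - 1)| :=
          Finset.abs_sum_le_sum_abs _ _
      _ ≤ ∑ _a : (Σ i : Fin l, Fin (m i)), δ :=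
          Finset.sum_le_sum fun a _ =>
            (hTrate a.1 t (htrate a.1) (b a) (hbmem a) (hbnorm a)).le
      _ = (N:ℝ) * δ := by rw [Finset.sum_const, Finset.card_univ, nsmul_eq_mul]
  have h2 : |(1/t) * (∑ j, Real.log (eig j))| ≤ (N:ℝ) * (2 * ((N:ℝ) * δ)) := by
    rw [abs_mul]
    have ht' : |1/t| ≤ 1 := by
      rw [abs_of_pos (by positivity), div_le_one ht0]; exact ht1
    have hsum : |∑ j, Real.log (eig j)| ≤ (N:ℝ) * (2 * ((N:ℝ) * δ)) := by
      calc |∑ j, Real.log (eig j)| ≤ ∑ j, |Real.log (eig j)| := Finset.abs_sum_le_sum_abs _ _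
        _ ≤ ∑ _j : (Σ i : Fin l, Fin (m i)), 2 * ((N:ℝ) * δ) :=
            Finset.sum_le_sum fun j _ => by
              have hj := abs_le.mp (heig j)
              exact aux_log_abs_le (by positivity) hNδ (by linarith [hj.1]) (by linarith [hj.2])
        _ = (N:ℝ) * (2 * ((N:ℝ) * δ)) := by
            rw [Finset.sum_const, Finset.card_univ, nsmul_eq_mul]
    calc |1/t| * |∑ j, Real.log (eig j)| ≤ 1 * ((N:ℝ) * (2 * ((N:ℝ) * δ))) :=
        mul_le_mul ht' hsum (abs_nonneg _) one_pos.le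
      _ = (N:ℝ) * (2 * ((N:ℝ) * δ)) := one_mul _
  apply lt_of_le_of_lt (abs_add_le _ _)
  apply lt_of_le_of_lt (add_le_add h1 h2)
  calc (N:ℝ)*δ + (N:ℝ)*(2*((N:ℝ)*δ)) = (2*(N:ℝ)^2 + (N:ℝ)) * δ := by ring
    _ < ε := hfin
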